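/- Let ρ₁₂, ρ₁₃, ρ₂₃ ∈ [−1,1]. Then there exist a, b, c ∈ [−1,1] with ρ₁₂ = ab, ρ₁₃ = ac, and ρ₂₃ = bc if and only if the following four conditions hold: ρ₁₂ ρ₁₃ ρ₂₃ ≥ 0, |ρ₁₂ ρ₁₃| ≤ |ρ₂₃|, |ρ₁₂ ρ₂₃| ≤ |ρ₁₃|, and |ρ₁₃ ρ₂₃| ≤ |ρ₁₂|. -/

import Mathlib

lemma tripod_key (x y : ℝ) (hx2 : x ^ 2 ≤ 1) : |x ^ 2 * y| ≤ |y| := by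
  rw [abs_mul, abs_of_nonneg (sq_nonneg x)]
  exact mul_le_of_le_one_left (abs_nonneg y) hx2

/-- Semialgebraic description of the Gaussian latent tree model of the tripod tree:
numbers `ρ12, ρ13, ρ23 ∈ [−1,1]` are products `ρ12 = a*b`, `ρ13 = a*c`, `ρ23 = b*c` of
edge correlations `a, b, c ∈ [−1,1]` if and only if `ρ12*ρ13*ρ23 ≥ 0`,
`|ρ12*ρ13| ≤ |ρ23|`, `|ρ12*ρ23| ≤ |ρ13|`, and `|ρ13*ρ23| ≤ |ρ12|`. -/
theorem tripod_semialgebraic_description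
    (ρ12 ρ13 ρ23 : ℝ)
    (h12 : ρ12 ∈ Set.Icc (-1 : ℝ) 1) (h13 : ρ13 ∈ Set.Icc (-1 : ℝ) 1)
    (h23 : ρ23 ∈ Set.Icc (-1 : ℝ) 1) :
    (∃ a b c : ℝ, a ∈ Set.Icc (-1 : ℝ) 1 ∧ b ∈ Set.Icc (-1 : ℝ) 1 ∧
        c ∈ Set.Icc (-1 : ℝ) 1 ∧ ρ12 = a * b ∧ ρ13 = a * c ∧ ρ23 = b * c) ↔
    (0 ≤ ρ12 * ρ13 * ρ23 ∧ |ρ12 * ρ13| ≤ |ρ23| ∧ |ρ12 * ρ23| ≤ |ρ13| ∧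
      |ρ13 * ρ23| ≤ |ρ12|) := by
  constructor
  · rintro ⟨a, b, c, ⟨ha1, ha2⟩, ⟨hb1, hb2⟩, ⟨hc1, hc2⟩, rfl, rfl, rfl⟩
    have ha : a ^ 2 ≤ 1 := by nlinarith
    have hb : b ^ 2 ≤ 1 := by nlinarith
    have hc : c ^ 2 ≤ 1 := by nlinarith
    refine ⟨by nlinarith [sq_nonneg (a * b * c)], ?_, ?_, ?_⟩
    · rw [show a * b * (a * c) = a ^ 2 * (b * c) from by ring]
      exact tripod_key a (b * c) ha
    · rw [show a * b * (b * c) = b ^ 2 * (a * c) from by ring]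
      exact tripod_key b (a * c) hb
    · rw [show a * c * (b * c) = c ^ 2 * (a * b) from by ring]
      exact tripod_key c (a * b) hc
  · rintro ⟨hp, h1, h2, h3⟩
    by_cases e12 : ρ12 = 0
    · have : ρ13 * ρ23 = 0 := by
        have := h3; rw [e12, abs_zero] at this
        exact abs_eq_zero.mp (le_antisymm this (abs_nonneg _))
      rcases mul_eq_zero.mp this with e13 | e23
      · exact ⟨0, ρ23, 1, by norm_num, h23, by norm_num,
          by simp [e12], by simp [e13], by simp⟩
      · exact ⟨ρ13, 0, 1, h13, by norm_num, by norm_num,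
          by simp [e12], by simp, by simp [e23]⟩
    · by_cases e13 : ρ13 = 0
      · have e23 : ρ23 = 0 := by
          have := h2; rw [e13, abs_zero] at this
          have h0 : ρ12 * ρ23 = 0 :=
            abs_eq_zero.mp (le_antisymm this (abs_nonneg _))
          rcases mul_eq_zero.mp h0 with h | h
          · exact absurd h e12
          · exact h
        exact ⟨1, ρ12, 0, by norm_num, h12, by norm_num,
          by simp, by simp [e13], by simp [e23]⟩
      · by_cases e23 : ρ23 = 0
        · exfalso
          have := h1; rw [e23, abs_zero] at this
          have h0 : ρ12 * ρ13 = 0 :=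
            abs_eq_zero.mp (le_antisymm this (abs_nonneg _))
          rcases mul_eq_zero.mp h0 with h | h
          · exact e12 h
          · exact e13 h
        · -- all nonzero
          have hp' : 0 < ρ12 * ρ13 * ρ23 :=
            lt_of_le_of_ne hp (Ne.symm (by positivity))
          set t : ℝ := ρ12 * ρ13 / ρ23 with ht_def
          have ht : 0 < t := by
            have : t = (ρ12 * ρ13 * ρ23) / ρ23 ^ 2 := by
              field_simp [ht_def]; rw [ht_def, div_mul_cancel₀ _ e23]
            rw [this]; positivity
          set a : ℝ := Real.sqrt t with ha_def
          have ha2 : a ^ 2 = t := Real.sq_sqrt ht.le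
          have ha0 : a ≠ 0 := by positivity
          set b : ℝ := ρ12 / a with hb_def
          set c : ℝ := ρ13 / a with hc_def
          have ht1 : t ≤ 1 := by
            have habs : t = |ρ12 * ρ13| / |ρ23| := by
              rw [← abs_div, abs_of_pos ht]
            rw [habs, div_le_one (abs_pos.mpr e23)]
            exact h1
          have hbsq : b ^ 2 ≤ 1 := by
            have hu : b ^ 2 = ρ12 * ρ23 / ρ13 := by
              rw [hb_def, div_pow, ha2, ht_def]
              field_simp
            have hupos : 0 < ρ12 * ρ23 / ρ13 := by rw [← hu]; positivity
            have habs : ρ12 * ρ23 / ρ13 = |ρ12 * ρ23| / |ρ13| := by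
              rw [← abs_div, abs_of_pos hupos]
            rw [hu, habs, div_le_one (abs_pos.mpr e13)]
            exact h2
          have hcsq : c ^ 2 ≤ 1 := by
            have hu : c ^ 2 = ρ13 * ρ23 / ρ12 := by
              rw [hc_def, div_pow, ha2, ht_def]
              field_simp
            have hupos : 0 < ρ13 * ρ23 / ρ12 := by rw [← hu]; positivity
            have habs : ρ13 * ρ23 / ρ12 = |ρ13 * ρ23| / |ρ12| := by
              rw [← abs_div, abs_of_pos hupos]
            rw [hu, habs, div_le_one (abs_pos.mpr e12)]
            exact h3
          refine ⟨a, b, c, ⟨?_, ?_⟩, ⟨?_, ?_⟩, ⟨?_, ?_⟩, ?_, ?_, ?_⟩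
          · have : 0 ≤ a := Real.sqrt_nonneg t
            linarith
          · nlinarith [ha2]
          · nlinarith
          · nlinarith
          · nlinarith
          · nlinarith
          · rw [hb_def]; field_simp
          · rw [hc_def]; field_simp
          · rw [hb_def, hc_def]
            rw [div_mul_div_comm, ← sq, ha2, ht_def]
            field_simp
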